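/- arXiv:1708.06065 — 10 statements merged into one kernel-verified Lean document; each statement's English description precedes it below -/
import Mathlib

section
/- Suppose A_ff is invertible, let P_ideal be the interpolation operator with F-block W := -A_ff⁻¹ * A_fc, let R = [Z, I] for arbitrary Z : Matrix C F ℝ, and suppose the Schur complement S := A_cc - A_cf * A_ff⁻¹ * A_fc (which equals K := R*A*P_ideal) is invertible. Then the residual-propagation operator of coarse-grid correction satisfies I - A*P_ideal*K⁻¹*R = fromBlocks I 0 (-Z) 0; equivalently, for every residual vector r with F-part r_f and C-part r_c, the propagated residual has F-part r_f and C-part -Z*r_f. -/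
open Matrix

/-- With ideal interpolation and invertible Schur complement, residual
propagation of coarse-grid correction is `fromBlocks I 0 (-Z) 0`: the
propagated residual has F-part `r_f` and C-part `-Z r_f`. -/
theorem residual_propagation_ideal_interpolation
    {F C : Type*} [Fintype F] [Fintype C] [DecidableEq F] [DecidableEq C]
    [Nonempty F] [Nonempty C]
    (A_ff : Matrix F F ℝ) (A_fc : Matrix F C ℝ) (A_cf : Matrix C F ℝ) (A_cc : Matrix C C ℝ)
    (Z : Matrix C F ℝ)
    (A : Matrix (F ⊕ C) (F ⊕ C) ℝ) (hA : A = fromBlocks A_ff A_fc A_cf A_cc)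
    (hAff : IsUnit A_ff.det)
    (P_ideal : Matrix (F ⊕ C) C ℝ)
    (hP : P_ideal = fromRows (-(A_ff⁻¹ * A_fc)) (1 : Matrix C C ℝ))
    (R : Matrix C (F ⊕ C) ℝ) (hR : R = fromCols Z (1 : Matrix C C ℝ))
    (S : Matrix C C ℝ) (hS : S = A_cc - A_cf * A_ff⁻¹ * A_fc) (hSinv : IsUnit S.det)
    (K : Matrix C C ℝ) (hK : K = R * A * P_ideal) :
    K = S ∧
    (1 : Matrix (F ⊕ C) (F ⊕ C) ℝ) - A * P_ideal * K⁻¹ * R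
        = fromBlocks (1 : Matrix F F ℝ) 0 (-Z) 0 ∧
    ∀ r : (F ⊕ C) → ℝ,
      (∀ f : F, (((1 : Matrix (F ⊕ C) (F ⊕ C) ℝ) - A * P_ideal * K⁻¹ * R).mulVec r)
          (Sum.inl f) = r (Sum.inl f)) ∧
      (∀ c : C, (((1 : Matrix (F ⊕ C) (F ⊕ C) ℝ) - A * P_ideal * K⁻¹ * R).mulVec r)
          (Sum.inr c) = (-(Z.mulVec fun f => r (Sum.inl f))) c) := by
  have hAP : A * P_ideal = fromRows 0 S := by
    rw [hA, hP, fromBlocks_mul_fromRows]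
    rw [Matrix.mul_neg, Matrix.mul_nonsing_inv_cancel_left _ _ hAff,
      Matrix.mul_neg, Matrix.mul_one, Matrix.mul_one, hS, ← Matrix.mul_assoc,
      neg_add_cancel, sub_eq_neg_add]
  have hKS : K = S := by
    rw [hK, Matrix.mul_assoc, hAP, hR, fromCols_mul_fromRows, Matrix.mul_zero,
      Matrix.one_mul, zero_add]
  have hE : (1 : Matrix (F ⊕ C) (F ⊕ C) ℝ) - A * P_ideal * K⁻¹ * R
      = fromBlocks (1 : Matrix F F ℝ) 0 (-Z) 0 := by
    rw [hKS, hAP, fromRows_mul, Matrix.zero_mul, Matrix.mul_nonsing_inv _ hSinv,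
      hR, fromRows_mul_fromCols, Matrix.zero_mul, Matrix.zero_mul,
      Matrix.one_mul, Matrix.one_mul]
    ext (i | i) (j | j) <;> simp [Matrix.one_apply]
  refine ⟨hKS, hE, fun r => ?_⟩
  rw [hE]
  constructor
  · intro f
    simp [fromBlocks_mulVec]
  · intro c
    simp [fromBlocks_mulVec, Function.comp_def, Matrix.neg_mulVec]
end

section
/- Suppose A_ff is invertible, let P_ideal be the interpolation operator with F-block W := -A_ff⁻¹ * A_fc, let R₀ = [0, I] be the restriction operator with Z = 0, and suppose K := R₀*A*P_ideal is invertible. Then the residual-propagation operator of coarse-grid correction satisfies I - A*P_ideal*K⁻¹*R₀ = fromBlocks I 0 0 0; in particular A*P_ideal*K⁻¹*R₀ is a symmetric idempotent matrix, so coarse-grid correction is an ℓ²-orthogonal projection on residuals. -/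
open Matrix

/-- With ideal interpolation and `Z = 0`, residual propagation of coarse-grid
correction is `fromBlocks I 0 0 0`; in particular `A P K⁻¹ R₀` is a symmetric
idempotent, i.e. an ℓ²-orthogonal projection on residuals. -/
theorem residual_propagation_ideal_interpolation_Z_zero
    {F C : Type*} [Fintype F] [Fintype C] [DecidableEq F] [DecidableEq C]
    [Nonempty F] [Nonempty C]
    (A_ff : Matrix F F ℝ) (A_fc : Matrix F C ℝ) (A_cf : Matrix C F ℝ) (A_cc : Matrix C C ℝ)
    (A : Matrix (F ⊕ C) (F ⊕ C) ℝ) (hA : A = fromBlocks A_ff A_fc A_cf A_cc)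
    (hAff : IsUnit A_ff.det)
    (P_ideal : Matrix (F ⊕ C) C ℝ)
    (hP : P_ideal = fromRows (-(A_ff⁻¹ * A_fc)) (1 : Matrix C C ℝ))
    (R₀ : Matrix C (F ⊕ C) ℝ) (hR : R₀ = fromCols (0 : Matrix C F ℝ) (1 : Matrix C C ℝ))
    (K : Matrix C C ℝ) (hK : K = R₀ * A * P_ideal) (hKinv : IsUnit K.det) :
    (1 : Matrix (F ⊕ C) (F ⊕ C) ℝ) - A * P_ideal * K⁻¹ * R₀
        = fromBlocks (1 : Matrix F F ℝ) 0 0 0 ∧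
    (A * P_ideal * K⁻¹ * R₀)ᵀ = A * P_ideal * K⁻¹ * R₀ ∧
    (A * P_ideal * K⁻¹ * R₀) * (A * P_ideal * K⁻¹ * R₀) = A * P_ideal * K⁻¹ * R₀ := by
  have hff : A_ff * (-(A_ff⁻¹ * A_fc)) = -A_fc := by
    rw [Matrix.mul_neg, ← Matrix.mul_assoc, Matrix.mul_nonsing_inv _ hAff, Matrix.one_mul]
  have hAP : A * P_ideal = fromRows 0 (A_cf * (-(A_ff⁻¹ * A_fc)) + A_cc) := by
    rw [hA, hP, fromBlocks_mul_fromRows, hff]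
    simp
  have hKval : K = A_cf * (-(A_ff⁻¹ * A_fc)) + A_cc := by
    rw [hK, Matrix.mul_assoc, hAP, hR, fromCols_mul_fromRows]
    simp
  have hAPK : A * P_ideal * K⁻¹ = fromRows 0 1 := by
    rw [hAP, ← hKval, fromRows_mul, Matrix.zero_mul, Matrix.mul_nonsing_inv _ hKinv]
  have hE : A * P_ideal * K⁻¹ * R₀ = fromBlocks 0 0 0 (1 : Matrix C C ℝ) := by
    rw [hAPK, hR, fromRows_mul_fromCols]
    simp
  refine ⟨?_, ?_, ?_⟩
  · rw [hE, ← fromBlocks_one]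
    ext (i | i) (j | j) <;> simp [fromBlocks]
  · rw [hE, fromBlocks_transpose]
    simp
  · rw [hE, fromBlocks_multiply]
    simp
end

section
/- Let Δ : Matrix F F ℝ be arbitrary, let P be the interpolation operator with F-block W := -Δ * A_fc, let R₀ = [0, I] be the restriction operator with Z = 0, and suppose K := R₀*A*P is invertible. Then the residual-propagation operator of coarse-grid correction satisfies A*P*K⁻¹*R₀ = fromBlocks 0 ((I - A_ff*Δ)*A_fc*K⁻¹) 0 I; moreover in this case K = A_cf*W + A_cc. -/
open Matrix

/-- With `W = -Δ A_fc` and `Z = 0`, residual propagation of coarse-grid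
correction is `fromBlocks 0 ((I - A_ff Δ) A_fc K⁻¹) 0 I`, and moreover
`K = A_cf W + A_cc`. -/
theorem residual_propagation_approximate_interpolation_Z_zero
    {F C : Type*} [Fintype F] [Fintype C] [DecidableEq F] [DecidableEq C]
    [Nonempty F] [Nonempty C]
    (A_ff : Matrix F F ℝ) (A_fc : Matrix F C ℝ) (A_cf : Matrix C F ℝ) (A_cc : Matrix C C ℝ)
    (Δ : Matrix F F ℝ) (W : Matrix F C ℝ) (hW : W = -(Δ * A_fc))
    (A : Matrix (F ⊕ C) (F ⊕ C) ℝ) (hA : A = fromBlocks A_ff A_fc A_cf A_cc)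
    (P : Matrix (F ⊕ C) C ℝ) (hP : P = fromRows W (1 : Matrix C C ℝ))
    (R₀ : Matrix C (F ⊕ C) ℝ) (hR : R₀ = fromCols (0 : Matrix C F ℝ) (1 : Matrix C C ℝ))
    (K : Matrix C C ℝ) (hK : K = R₀ * A * P) (hKinv : IsUnit K.det) :
    A * P * K⁻¹ * R₀
        = fromBlocks 0 (((1 : Matrix F F ℝ) - A_ff * Δ) * A_fc * K⁻¹) 0 (1 : Matrix C C ℝ) ∧
    K = A_cf * W + A_cc := by
  have hAP : A * P = fromRows (A_ff * W + A_fc) (A_cf * W + A_cc) := by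
    rw [hA, hP, ← fromRows_fromCols_eq_fromBlocks, fromRows_mul,
      fromCols_mul_fromRows, fromCols_mul_fromRows]
    simp
  have hK' : K = A_cf * W + A_cc := by
    rw [hK, Matrix.mul_assoc, hAP, hR, fromCols_mul_fromRows]
    simp
  refine ⟨?_, hK'⟩
  have h1 : A_ff * W + A_fc = (1 - A_ff * Δ) * A_fc := by
    rw [hW, Matrix.mul_neg, Matrix.sub_mul, Matrix.one_mul, Matrix.mul_assoc]; abel
  rw [hAP, hR, fromRows_mul, fromRows_mul, mul_fromCols, mul_fromCols,
    ← fromRows_fromCols_eq_fromBlocks, h1, ← hK', Matrix.mul_nonsing_inv _ hKinv]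
  simp
end

section
/- (Lemma on coarse-grid correction with Z = 0.) Let Δ : Matrix F F ℝ be arbitrary, let P be the interpolation operator with F-block W := -Δ * A_fc, let R₀ = [0, I] be the restriction operator with Z = 0, suppose K := R₀*A*P is invertible, and let Π̃ := A*P*K⁻¹*R₀ denote the residual-propagation coarse-grid-correction projector. Then its ℓ²-operator norm satisfies ‖Π̃‖² = 1 + ‖B‖², where B := (I - A_ff*Δ)*A_fc*K⁻¹ and ‖B‖ is the ℓ²-operator norm of B (i.e., its largest singular value). -/
open Matrix
open scoped Matrix.Norms.L2Operator

private lemma euc_nsq {ι : Type*} [Fintype ι] (x : EuclideanSpace ℝ ι) :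
    ‖x‖ ^ 2 = ∑ i, (x i) ^ 2 := by
  rw [EuclideanSpace.norm_eq, Real.sq_sqrt (by positivity)]
  simp [sq_abs]

private def eucRestr {F C : Type*} (x : EuclideanSpace ℝ (F ⊕ C)) : EuclideanSpace ℝ C :=
  WithLp.toLp 2 (fun j => x (Sum.inr j))

private def eucExt {F C : Type*} (v : EuclideanSpace ℝ C) : EuclideanSpace ℝ (F ⊕ C) :=
  WithLp.toLp 2 (fun k => Sum.elim (fun _ => (0:ℝ)) (fun j => v j) k)

set_option maxHeartbeats 2000000 in
theorem norm_sq_block {F C : Type*} [Fintype F] [Fintype C] [DecidableEq F] [DecidableEq C]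
    [Nonempty C] (B : Matrix F C ℝ) :
    ‖(fromBlocks 0 B 0 (1 : Matrix C C ℝ) : Matrix (F ⊕ C) (F ⊕ C) ℝ)‖ ^ 2 = 1 + ‖B‖ ^ 2 := by
  classical
  set M : Matrix (F ⊕ C) (F ⊕ C) ℝ := fromBlocks 0 B 0 1 with hM
  set f := (Matrix.toEuclideanLin (𝕜 := ℝ) (m := F ⊕ C) (n := F ⊕ C)).trans
    LinearMap.toContinuousLinearMap M with hf
  set g := (Matrix.toEuclideanLin (𝕜 := ℝ) (m := F) (n := C)).trans
    LinearMap.toContinuousLinearMap B with hg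
  have hMn : ‖M‖ = ‖f‖ := Matrix.l2_opNorm_def M
  have hBn : ‖B‖ = ‖g‖ := Matrix.l2_opNorm_def B
  have key : ∀ x : EuclideanSpace ℝ (F ⊕ C),
      ‖f x‖ ^ 2 = ‖g (eucRestr x)‖ ^ 2 + ‖eucRestr (F := F) x‖ ^ 2 := by
    intro x
    rw [euc_nsq, euc_nsq, euc_nsq, Fintype.sum_sum_type]
    congr 1
    · refine Finset.sum_congr rfl fun i _ => ?_
      congr 1
      show (M *ᵥ (fun k => x k)) (Sum.inl i) = (B *ᵥ (fun j => x (Sum.inr j))) i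
      simp [hM, Matrix.mulVec, dotProduct, Fintype.sum_sum_type]
    · refine Finset.sum_congr rfl fun j _ => ?_
      congr 1
      show (M *ᵥ (fun k => x k)) (Sum.inr j) = x (Sum.inr j)
      simp [hM, Matrix.mulVec, dotProduct, Fintype.sum_sum_type, Matrix.one_apply]
  have hxc_le : ∀ x : EuclideanSpace ℝ (F ⊕ C),
      ‖eucRestr (F := F) x‖ ^ 2 ≤ ‖x‖ ^ 2 := by
    intro x
    rw [euc_nsq, euc_nsq, Fintype.sum_sum_type]
    have : (0:ℝ) ≤ ∑ i : F, (x (Sum.inl i)) ^ 2 := by positivity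
    have h0 : ∑ j : C, (eucRestr (F := F) x j) ^ 2 = ∑ j : C, (x (Sum.inr j)) ^ 2 := rfl
    rw [h0]; linarith
  -- upper bound
  have hub : ‖M‖ ^ 2 ≤ 1 + ‖B‖ ^ 2 := by
    have h : ‖f‖ ≤ Real.sqrt (1 + ‖B‖ ^ 2) := by
      refine ContinuousLinearMap.opNorm_le_bound _ (Real.sqrt_nonneg _) fun x => ?_
      have h1 : ‖g (eucRestr x)‖ ≤ ‖B‖ * ‖eucRestr (F := F) x‖ := by
        rw [hBn]; exact g.le_opNorm _
      have h1' : ‖g (eucRestr x)‖ ^ 2 ≤ ‖B‖ ^ 2 * ‖eucRestr (F := F) x‖ ^ 2 := by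
        have := pow_le_pow_left₀ (norm_nonneg _) h1 2
        rwa [mul_pow] at this
      have h1'' : ‖B‖ ^ 2 * ‖eucRestr (F := F) x‖ ^ 2 ≤ ‖B‖ ^ 2 * ‖x‖ ^ 2 :=
        mul_le_mul_of_nonneg_left (hxc_le x) (by positivity)
      have h2 : ‖f x‖ ^ 2 ≤ (1 + ‖B‖ ^ 2) * ‖x‖ ^ 2 := by
        rw [key x]
        have := hxc_le x
        nlinarith
      calc ‖f x‖ = Real.sqrt (‖f x‖ ^ 2) := (Real.sqrt_sq (norm_nonneg _)).symm
        _ ≤ Real.sqrt ((1 + ‖B‖ ^ 2) * ‖x‖ ^ 2) := Real.sqrt_le_sqrt h2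
        _ = Real.sqrt (1 + ‖B‖ ^ 2) * ‖x‖ := by
            rw [Real.sqrt_mul (by positivity), Real.sqrt_sq (norm_nonneg _)]
    have h3 := pow_le_pow_left₀ (norm_nonneg f) h 2
    rw [Real.sq_sqrt (by positivity)] at h3
    rw [hMn]; exact h3
  -- lower bound pieces
  have hx : ∀ v : EuclideanSpace ℝ C, ‖g v‖ ^ 2 + ‖v‖ ^ 2 ≤ ‖M‖ ^ 2 * ‖v‖ ^ 2 := by
    intro v
    have hxn : ‖eucExt (F := F) v‖ ^ 2 = ‖v‖ ^ 2 := by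
      rw [euc_nsq, euc_nsq, Fintype.sum_sum_type]
      have h0 : ∀ i : F, eucExt (F := F) v (Sum.inl i) = 0 := fun _ => rfl
      have h1 : ∀ j : C, eucExt (F := F) v (Sum.inr j) = v j := fun _ => rfl
      simp [h0, h1]
    have hfx : ‖f (eucExt v)‖ ≤ ‖M‖ * ‖eucExt (F := F) v‖ := by
      rw [hMn]; exact f.le_opNorm _
    have h1 := pow_le_pow_left₀ (norm_nonneg _) hfx 2
    rw [mul_pow, hxn] at h1
    have h2 := key (eucExt v)
    have hxc : eucRestr (F := F) (eucExt (F := F) v) = v := rfl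
    rw [hxc] at h2
    rw [h2] at h1
    exact h1
  have hM1 : 1 ≤ ‖M‖ ^ 2 := by
    obtain ⟨j⟩ := (inferInstance : Nonempty C)
    have hv : ‖(EuclideanSpace.single j (1:ℝ))‖ = 1 := by
      rw [EuclideanSpace.norm_single]; norm_num
    have h := hx (EuclideanSpace.single j (1:ℝ))
    rw [hv] at h
    nlinarith [norm_nonneg (g (EuclideanSpace.single j (1:ℝ)))]
  have hlb : 1 + ‖B‖ ^ 2 ≤ ‖M‖ ^ 2 := by
    have h : ‖g‖ ≤ Real.sqrt (‖M‖ ^ 2 - 1) := by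
      refine ContinuousLinearMap.opNorm_le_bound _ (Real.sqrt_nonneg _) fun v => ?_
      have h2 : ‖g v‖ ^ 2 ≤ (‖M‖ ^ 2 - 1) * ‖v‖ ^ 2 := by nlinarith [hx v]
      calc ‖g v‖ = Real.sqrt (‖g v‖ ^ 2) := (Real.sqrt_sq (norm_nonneg _)).symm
        _ ≤ Real.sqrt ((‖M‖ ^ 2 - 1) * ‖v‖ ^ 2) := Real.sqrt_le_sqrt h2
        _ = Real.sqrt (‖M‖ ^ 2 - 1) * ‖v‖ := by
            rw [Real.sqrt_mul (by linarith), Real.sqrt_sq (norm_nonneg _)]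
    have h3 := pow_le_pow_left₀ (norm_nonneg g) h 2
    rw [Real.sq_sqrt (by linarith)] at h3
    rw [hBn]
    linarith
  linarith


/-- Lemma on coarse-grid correction with `Z = 0`: the ℓ² operator norm of the
residual-propagation coarse-grid-correction projector `Π̃ = A P K⁻¹ R₀`
satisfies `‖Π̃‖² = 1 + ‖B‖²` where `B = (I - A_ff Δ) A_fc K⁻¹`. -/
theorem norm_sq_cgc_projector_Z_zero
    {F C : Type*} [Fintype F] [Fintype C] [DecidableEq F] [DecidableEq C]
    [Nonempty F] [Nonempty C]
    (A_ff : Matrix F F ℝ) (A_fc : Matrix F C ℝ) (A_cf : Matrix C F ℝ) (A_cc : Matrix C C ℝ)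
    (Δ : Matrix F F ℝ) (W : Matrix F C ℝ) (hW : W = -(Δ * A_fc))
    (A : Matrix (F ⊕ C) (F ⊕ C) ℝ) (hA : A = fromBlocks A_ff A_fc A_cf A_cc)
    (P : Matrix (F ⊕ C) C ℝ) (hP : P = fromRows W (1 : Matrix C C ℝ))
    (R₀ : Matrix C (F ⊕ C) ℝ) (hR : R₀ = fromCols (0 : Matrix C F ℝ) (1 : Matrix C C ℝ))
    (K : Matrix C C ℝ) (hK : K = R₀ * A * P) (hKinv : IsUnit K.det)
    (Pit : Matrix (F ⊕ C) (F ⊕ C) ℝ) (hPit : Pit = A * P * K⁻¹ * R₀)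
    (B : Matrix F C ℝ) (hB : B = ((1 : Matrix F F ℝ) - A_ff * Δ) * A_fc * K⁻¹) :
    ‖Pit‖ ^ 2 = 1 + ‖B‖ ^ 2 := by
  have hAP : A * P = fromRows (((1 : Matrix F F ℝ) - A_ff * Δ) * A_fc) (A_cf * W + A_cc) := by
    rw [hA, hP, fromBlocks_mul_fromRows, hW, Matrix.sub_mul, Matrix.one_mul,
      Matrix.mul_neg, Matrix.mul_one, Matrix.mul_one, Matrix.mul_assoc, sub_eq_add_neg,
      add_comm]
  have hKval : K = A_cf * W + A_cc := by
    rw [hK, Matrix.mul_assoc, hAP, hR, fromCols_mul_fromRows]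
    simp
  have hPitB : Pit = fromBlocks 0 B 0 1 := by
    have h1 : Pit = fromRows B (1 : Matrix C C ℝ) * R₀ := by
      rw [hPit, hAP, fromRows_mul, ← hKval, mul_nonsing_inv _ hKinv, hB, hKval]
    rw [h1, hR, fromRows_mul_fromCols]
    simp
  rw [hPitB]
  exact norm_sq_block B
end

section
/- Suppose A_ff is invertible, let R_ideal = [-A_cf * A_ff⁻¹, I] be the ideal restriction operator, and suppose the Schur complement S := A_cc - A_cf * A_ff⁻¹ * A_fc is invertible. Then for every W : Matrix F C ℝ, with P the interpolation operator with F-block W, one has K := R_ideal * A * P = S, and the coarse-grid-correction error-propagation operator satisfies I - P*K⁻¹*R_ideal*A = fromBlocks I (-W) 0 0; in particular the C-component of the propagated error is zero for every initial error, independent of the choice of W. -/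
open Matrix

/-- With ideal restriction `R_ideal = [-A_cf A_ff⁻¹, I]` and invertible Schur
complement `S`, for every interpolation F-block `W`: the coarse-grid operator
equals `S` and error propagation of coarse-grid correction is
`fromBlocks I (-W) 0 0`; in particular the C-component of the propagated error
is zero, independent of `W`. -/
theorem error_propagation_ideal_restriction
    {F C : Type*} [Fintype F] [Fintype C] [DecidableEq F] [DecidableEq C]
    [Nonempty F] [Nonempty C]
    (A_ff : Matrix F F ℝ) (A_fc : Matrix F C ℝ) (A_cf : Matrix C F ℝ) (A_cc : Matrix C C ℝ)
    (A : Matrix (F ⊕ C) (F ⊕ C) ℝ) (hA : A = fromBlocks A_ff A_fc A_cf A_cc)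
    (hAff : IsUnit A_ff.det)
    (R_ideal : Matrix C (F ⊕ C) ℝ)
    (hR : R_ideal = fromCols (-(A_cf * A_ff⁻¹)) (1 : Matrix C C ℝ))
    (S : Matrix C C ℝ) (hS : S = A_cc - A_cf * A_ff⁻¹ * A_fc) (hSinv : IsUnit S.det) :
    ∀ W : Matrix F C ℝ, ∀ P : Matrix (F ⊕ C) C ℝ, P = fromRows W (1 : Matrix C C ℝ) →
      R_ideal * A * P = S ∧
      (1 : Matrix (F ⊕ C) (F ⊕ C) ℝ) - P * (R_ideal * A * P)⁻¹ * R_ideal * A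
          = fromBlocks (1 : Matrix F F ℝ) (-W) 0 0 ∧
      ∀ e : (F ⊕ C) → ℝ, ∀ c : C,
        (((1 : Matrix (F ⊕ C) (F ⊕ C) ℝ) - P * (R_ideal * A * P)⁻¹ * R_ideal * A).mulVec e)
          (Sum.inr c) = 0 := by
  intro W P hP
  have hRA : R_ideal * A = fromCols 0 S := by
    rw [hR, hA, fromCols_mul_fromBlocks, hS]
    simp [Matrix.mul_assoc, Matrix.nonsing_inv_mul _ hAff, sub_eq_neg_add]
  have hK : R_ideal * A * P = S := by
    rw [hRA, hP, fromCols_mul_fromRows]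
    simp
  have hE : (1 : Matrix (F ⊕ C) (F ⊕ C) ℝ) - P * (R_ideal * A * P)⁻¹ * R_ideal * A
      = fromBlocks (1 : Matrix F F ℝ) (-W) 0 0 := by
    rw [hK, hP]
    simp only [fromRows_mul, mul_fromCols, hRA, Matrix.mul_zero, Matrix.mul_assoc,
      Matrix.nonsing_inv_mul _ hSinv, Matrix.mul_one]
    ext (i | i) (j | j) <;>
      simp [fromBlocks, Matrix.one_apply]
  refine ⟨hK, hE, ?_⟩
  intro e c
  rw [hE]
  simp [fromBlocks_mulVec]
end

section
/- Let Δ : Matrix F F ℝ and suppose K := R*A*P is invertible. Define the effective interpolation Ŵ := (I - Δ*A_ff)*W - Δ*A_fc and M⁻¹ := (fromBlocks I Ŵ 0 I) * (fromBlocks Δ 0 0 K⁻¹) * (fromBlocks I 0 Z I). Then the two-grid error-propagation operator consisting of coarse-grid correction followed by F-relaxation satisfies (fromBlocks (I - Δ*A_ff) (-Δ*A_fc) 0 I) * (I - P*K⁻¹*R*A) = I - M⁻¹*A. -/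
open Matrix

/-- The two-grid error-propagation operator (coarse-grid correction followed by
F-relaxation) can be written as `I - M⁻¹ A` for the approximate block LDU
preconditioner `M`. -/
theorem two_grid_error_propagation_LDU_form
    {F C : Type*} [Fintype F] [Fintype C] [DecidableEq F] [DecidableEq C]
    [Nonempty F] [Nonempty C]
    (A_ff : Matrix F F ℝ) (A_fc : Matrix F C ℝ) (A_cf : Matrix C F ℝ) (A_cc : Matrix C C ℝ)
    (W : Matrix F C ℝ) (Z : Matrix C F ℝ) (Δ : Matrix F F ℝ)
    (A : Matrix (F ⊕ C) (F ⊕ C) ℝ) (hA : A = fromBlocks A_ff A_fc A_cf A_cc)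
    (P : Matrix (F ⊕ C) C ℝ) (hP : P = fromRows W (1 : Matrix C C ℝ))
    (R : Matrix C (F ⊕ C) ℝ) (hR : R = fromCols Z (1 : Matrix C C ℝ))
    (K : Matrix C C ℝ) (hK : K = R * A * P) (hKinv : IsUnit K.det)
    (What : Matrix F C ℝ) (hWhat : What = ((1 : Matrix F F ℝ) - Δ * A_ff) * W - Δ * A_fc)
    (Minv : Matrix (F ⊕ C) (F ⊕ C) ℝ)
    (hMinv : Minv = fromBlocks (1 : Matrix F F ℝ) What 0 (1 : Matrix C C ℝ)
        * fromBlocks Δ 0 0 K⁻¹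
        * fromBlocks (1 : Matrix F F ℝ) 0 Z (1 : Matrix C C ℝ)) :
    fromBlocks ((1 : Matrix F F ℝ) - Δ * A_ff) (-(Δ * A_fc)) 0 (1 : Matrix C C ℝ)
        * ((1 : Matrix (F ⊕ C) (F ⊕ C) ℝ) - P * K⁻¹ * R * A)
      = 1 - Minv * A := by
  subst hA hP hR hWhat hMinv
  set E : Matrix (F ⊕ C) (F ⊕ C) ℝ :=
    fromBlocks ((1 : Matrix F F ℝ) - Δ * A_ff) (-(Δ * A_fc)) 0 (1 : Matrix C C ℝ) with hE
  have h1 : fromBlocks Δ 0 0 (0 : Matrix C C ℝ) * fromBlocks A_ff A_fc A_cf A_cc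
      = 1 - E := by
    rw [hE, show (1 : Matrix (F ⊕ C) (F ⊕ C) ℝ) = fromBlocks 1 0 0 1 from (fromBlocks_one).symm]
    simp only [Matrix.fromBlocks_multiply, sub_eq_add_neg, Matrix.fromBlocks_neg,
      Matrix.fromBlocks_add, Matrix.fromBlocks_inj]
    refine ⟨by simp [Matrix.mul_assoc], by simp [Matrix.mul_assoc], by simp [Matrix.mul_assoc], by simp [Matrix.mul_assoc]⟩
  have h2 : E * fromRows W (1 : Matrix C C ℝ)
      = fromRows (((1 : Matrix F F ℝ) - Δ * A_ff) * W - Δ * A_fc) (1 : Matrix C C ℝ) := by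
    rw [hE, fromBlocks_mul_fromRows]
    congr 1 <;> simp [Matrix.mul_assoc, sub_eq_add_neg]
  have h3 : fromBlocks (1 : Matrix F F ℝ) (((1 : Matrix F F ℝ) - Δ * A_ff) * W - Δ * A_fc) 0
        (1 : Matrix C C ℝ) * fromBlocks Δ 0 0 K⁻¹
        * fromBlocks (1 : Matrix F F ℝ) 0 Z (1 : Matrix C C ℝ)
      = fromBlocks Δ 0 0 (0 : Matrix C C ℝ)
        + fromRows (((1 : Matrix F F ℝ) - Δ * A_ff) * W - Δ * A_fc) (1 : Matrix C C ℝ) * K⁻¹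
          * fromCols Z (1 : Matrix C C ℝ) := by
    rw [fromRows_mul, fromRows_mul_fromCols]
    simp only [Matrix.fromBlocks_multiply, Matrix.fromBlocks_add, Matrix.fromBlocks_inj]
    refine ⟨by simp [Matrix.mul_assoc], by simp [Matrix.mul_assoc], by simp [Matrix.mul_assoc], by simp [Matrix.mul_assoc]⟩
  rw [h3, Matrix.mul_sub, Matrix.mul_one, add_mul, h1,
    show fromRows (((1 : Matrix F F ℝ) - Δ * A_ff) * W - Δ * A_fc) (1 : Matrix C C ℝ) = E * fromRows W 1 from h2.symm]
  simp only [Matrix.mul_assoc]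
  rw [← Matrix.mul_assoc E]
  abel
end

section
/- Let Δ : Matrix F F ℝ and suppose K := R*A*P is invertible. Define Ŵ := (I - Δ*A_ff)*W - Δ*A_fc, M⁻¹ := (fromBlocks I Ŵ 0 I) * (fromBlocks Δ 0 0 K⁻¹) * (fromBlocks I 0 Z I), H := I - Δ*A_ff - Ŵ*K⁻¹*(Z*A_ff + A_cf), and J := -K⁻¹*(Z*A_ff + A_cf). Then I - M⁻¹*A = fromBlocks H (-H*W) J (-J*W); in particular (I - M⁻¹*A) * P = 0, so the range of P lies in the null space of I - M⁻¹*A, and the range of I - M⁻¹*A is contained in the column span of the block column (H; J). -/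
open Matrix

/-- Block structure of the two-grid error propagator `I - M⁻¹ A`: it equals
`fromBlocks H (-H W) J (-J W)`; in particular `(I - M⁻¹ A) P = 0` and the range
of `I - M⁻¹ A` is contained in the column span of the block column `(H; J)`. -/
theorem two_grid_error_propagation_block_structure
    {F C : Type*} [Fintype F] [Fintype C] [DecidableEq F] [DecidableEq C]
    [Nonempty F] [Nonempty C]
    (A_ff : Matrix F F ℝ) (A_fc : Matrix F C ℝ) (A_cf : Matrix C F ℝ) (A_cc : Matrix C C ℝ)
    (W : Matrix F C ℝ) (Z : Matrix C F ℝ) (Δ : Matrix F F ℝ)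
    (A : Matrix (F ⊕ C) (F ⊕ C) ℝ) (hA : A = fromBlocks A_ff A_fc A_cf A_cc)
    (P : Matrix (F ⊕ C) C ℝ) (hP : P = fromRows W (1 : Matrix C C ℝ))
    (R : Matrix C (F ⊕ C) ℝ) (hR : R = fromCols Z (1 : Matrix C C ℝ))
    (K : Matrix C C ℝ) (hK : K = R * A * P) (hKinv : IsUnit K.det)
    (What : Matrix F C ℝ) (hWhat : What = ((1 : Matrix F F ℝ) - Δ * A_ff) * W - Δ * A_fc)
    (Minv : Matrix (F ⊕ C) (F ⊕ C) ℝ)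
    (hMinv : Minv = fromBlocks (1 : Matrix F F ℝ) What 0 (1 : Matrix C C ℝ)
        * fromBlocks Δ 0 0 K⁻¹
        * fromBlocks (1 : Matrix F F ℝ) 0 Z (1 : Matrix C C ℝ))
    (H : Matrix F F ℝ)
    (hH : H = (1 : Matrix F F ℝ) - Δ * A_ff - What * K⁻¹ * (Z * A_ff + A_cf))
    (J : Matrix C F ℝ) (hJ : J = -(K⁻¹ * (Z * A_ff + A_cf))) :
    (1 : Matrix (F ⊕ C) (F ⊕ C) ℝ) - Minv * A = fromBlocks H (-(H * W)) J (-(J * W)) ∧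
    ((1 : Matrix (F ⊕ C) (F ⊕ C) ℝ) - Minv * A) * P = 0 ∧
    ∀ x : (F ⊕ C) → ℝ, ∃ η : F → ℝ,
      ((1 : Matrix (F ⊕ C) (F ⊕ C) ℝ) - Minv * A).mulVec x = (fromRows H J).mulVec η := by
  have hX : K⁻¹ * K = 1 := nonsing_inv_mul K hKinv
  have hKm : K = (Z * A_ff + A_cf) * W + (Z * A_fc + A_cc) := by
    rw [hK, hA, hP, hR, fromCols_mul_fromBlocks, fromCols_mul_fromRows]
    simp only [Matrix.one_mul, Matrix.mul_one]
  have key : (1 : Matrix (F ⊕ C) (F ⊕ C) ℝ) - Minv * A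
      = fromBlocks H (-(H * W)) J (-(J * W)) := by
    rw [hMinv, hA, hH, hJ]
    rw [show (1 : Matrix (F ⊕ C) (F ⊕ C) ℝ) = fromBlocks 1 0 0 1 from fromBlocks_one.symm,
      fromBlocks_multiply, fromBlocks_multiply, fromBlocks_multiply, sub_eq_add_neg,
      fromBlocks_neg, fromBlocks_add, fromBlocks_inj]
    simp only [Matrix.zero_mul, Matrix.mul_zero, Matrix.one_mul, Matrix.mul_one,
      zero_add, add_zero, Matrix.mul_add, Matrix.add_mul, Matrix.mul_assoc,
      Matrix.neg_mul, neg_add, Matrix.sub_mul, Matrix.mul_sub, sub_eq_add_neg]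
    refine ⟨by abel, ?_, trivial, ?_⟩
    · have e1 : What * (K⁻¹ * K) = What := by rw [hX, Matrix.mul_one]
      nth_rewrite 2 [hKm] at e1
      simp only [Matrix.mul_add, Matrix.add_mul, Matrix.mul_assoc] at e1
      have e2 : What = W - Δ * (A_ff * W) - Δ * A_fc := by
        rw [hWhat]; simp only [Matrix.sub_mul, Matrix.one_mul, Matrix.mul_assoc]
      linear_combination (norm := abel) -e1 - e2
    · have e1 : K⁻¹ * K = 1 := hX
      nth_rewrite 2 [hKm] at e1
      simp only [Matrix.mul_add, Matrix.add_mul, Matrix.mul_assoc] at e1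
      linear_combination (norm := abel) -e1
  refine ⟨key, ?_, ?_⟩
  · rw [key, hP, fromBlocks_mul_fromRows]
    simp
  · intro x
    refine ⟨(x ∘ Sum.inl) - W *ᵥ (x ∘ Sum.inr), ?_⟩
    rw [key]
    have hx : x = Sum.elim (x ∘ Sum.inl) (x ∘ Sum.inr) := (Sum.elim_comp_inl_inr x).symm
    rw [hx, fromBlocks_mulVec, fromRows_mulVec]
    simp [Matrix.mulVec_sub, Matrix.mulVec_add, Matrix.mulVec_neg, Matrix.neg_mulVec, Matrix.mulVec_mulVec, sub_eq_add_neg]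
end

section
/- Let Δ : Matrix F F ℝ and suppose K := R*A*P is invertible. Define Ŵ := (I - Δ*A_ff)*W - Δ*A_fc, M⁻¹ := (fromBlocks I Ŵ 0 I) * (fromBlocks Δ 0 0 K⁻¹) * (fromBlocks I 0 Z I), and G := (I - Δ*A_ff) + Δ*(A_ff*W + A_fc)*K⁻¹*(Z*A_ff + A_cf) : Matrix F F ℝ. Then for every nonzero complex number λ, λ is an eigenvalue of (the complexification of) I - M⁻¹*A if and only if λ is an eigenvalue of (the complexification of) G. -/
open Matrix

lemma spec_pad {F C : Type*} [Fintype F] [Fintype C] [DecidableEq F] [DecidableEq C]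
    (M : Matrix F F ℂ) (lam : ℂ) (h : lam ≠ 0) :
    lam ∈ spectrum ℂ (fromBlocks M 0 0 (0 : Matrix C C ℂ)) ↔ lam ∈ spectrum ℂ M := by
  rw [spectrum.mem_iff, spectrum.mem_iff]
  rw [Algebra.algebraMap_eq_smul_one, Algebra.algebraMap_eq_smul_one]
  rw [Matrix.isUnit_iff_isUnit_det, Matrix.isUnit_iff_isUnit_det]
  rw [isUnit_iff_ne_zero, isUnit_iff_ne_zero, not_not, not_not]
  have h1 : (lam • (1 : Matrix (F ⊕ C) (F ⊕ C) ℂ)) - fromBlocks M 0 0 0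
      = fromBlocks (lam • 1 - M) 0 0 (lam • 1) := by
    rw [← fromBlocks_one, fromBlocks_smul]
    ext (i|i) (j|j) <;> simp [fromBlocks]
  rw [h1, det_fromBlocks_zero₂₁]
  have h2 : (lam • (1 : Matrix C C ℂ)).det ≠ 0 := by
    simp [det_smul, h]
  constructor
  · intro hx; rcases mul_eq_zero.mp hx with hx | hx
    · exact hx
    · exact absurd hx h2
  · intro hx; rw [hx, zero_mul]

/-- Nonzero eigenvalues (over ℂ) of the two-grid error propagator `I - M⁻¹ A`
coincide with those of `G = (I - Δ A_ff) + Δ (A_ff W + A_fc) K⁻¹ (Z A_ff + A_cf)`. -/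
theorem two_grid_nonzero_eigenvalues
    {F C : Type*} [Fintype F] [Fintype C] [DecidableEq F] [DecidableEq C]
    [Nonempty F] [Nonempty C]
    (A_ff : Matrix F F ℝ) (A_fc : Matrix F C ℝ) (A_cf : Matrix C F ℝ) (A_cc : Matrix C C ℝ)
    (W : Matrix F C ℝ) (Z : Matrix C F ℝ) (Δ : Matrix F F ℝ)
    (A : Matrix (F ⊕ C) (F ⊕ C) ℝ) (hA : A = fromBlocks A_ff A_fc A_cf A_cc)
    (P : Matrix (F ⊕ C) C ℝ) (hP : P = fromRows W (1 : Matrix C C ℝ))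
    (R : Matrix C (F ⊕ C) ℝ) (hR : R = fromCols Z (1 : Matrix C C ℝ))
    (K : Matrix C C ℝ) (hK : K = R * A * P) (hKinv : IsUnit K.det)
    (What : Matrix F C ℝ) (hWhat : What = ((1 : Matrix F F ℝ) - Δ * A_ff) * W - Δ * A_fc)
    (Minv : Matrix (F ⊕ C) (F ⊕ C) ℝ)
    (hMinv : Minv = fromBlocks (1 : Matrix F F ℝ) What 0 (1 : Matrix C C ℝ)
        * fromBlocks Δ 0 0 K⁻¹
        * fromBlocks (1 : Matrix F F ℝ) 0 Z (1 : Matrix C C ℝ))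
    (G : Matrix F F ℝ)
    (hG : G = ((1 : Matrix F F ℝ) - Δ * A_ff)
        + Δ * (A_ff * W + A_fc) * K⁻¹ * (Z * A_ff + A_cf)) :
    ∀ lam : ℂ, lam ≠ 0 →
      (lam ∈ spectrum ℂ (((1 : Matrix (F ⊕ C) (F ⊕ C) ℝ) - Minv * A).map
          (algebraMap ℝ ℂ)) ↔
        lam ∈ spectrum ℂ (G.map (algebraMap ℝ ℂ))) := by
  intro lam hlam
  have hKe : K = (Z * A_ff + A_cf) * W + (Z * A_fc + A_cc) := by
    rw [hK, hR, hA, hP, fromCols_mul_fromBlocks, fromCols_mul_fromRows,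
      Matrix.one_mul, Matrix.one_mul, Matrix.mul_one]
  have h1 : K⁻¹ * ((Z * A_ff + A_cf) * W + (Z * A_fc + A_cc)) = 1 := by
    rw [← hKe]; exact Matrix.nonsing_inv_mul K hKinv
  simp only [Matrix.mul_add, Matrix.add_mul, Matrix.mul_assoc] at h1
  have hmain : K⁻¹ * A_cc
      = 1 - K⁻¹ * (Z * (A_ff * W)) - K⁻¹ * (A_cf * W) - K⁻¹ * (Z * A_fc) := by
    rw [← h1]; abel
  have key1 : (1 : Matrix (F ⊕ C) (F ⊕ C) ℝ) - Minv * A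
      = fromRows (((1 : Matrix F F ℝ) - Δ * A_ff) - What * (K⁻¹ * (Z * A_ff + A_cf)))
          (-(K⁻¹ * (Z * A_ff + A_cf))) * fromCols 1 (-W) := by
    rw [fromRows_mul_fromCols, hMinv, hA, fromBlocks_multiply, fromBlocks_multiply,
      fromBlocks_multiply, ← fromBlocks_one (l := F) (m := C) (α := ℝ)]
    have hsub : ∀ (a a' : Matrix F F ℝ) (b b' : Matrix F C ℝ) (c c' : Matrix C F ℝ)
        (d d' : Matrix C C ℝ), fromBlocks a b c d - fromBlocks a' b' c' d'
          = fromBlocks (a - a') (b - b') (c - c') (d - d') := by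
      intro a a' b b' c c' d d'
      ext (i|i) (j|j) <;> simp [fromBlocks]
    rw [hsub, fromBlocks_inj]
    refine ⟨?_, ?_, ?_, ?_⟩ <;>
    · simp only [hWhat, Matrix.mul_add, Matrix.add_mul, Matrix.sub_mul, Matrix.mul_sub,
        Matrix.mul_assoc, Matrix.one_mul, Matrix.mul_one, Matrix.zero_mul, Matrix.mul_zero,
        Matrix.neg_mul, Matrix.mul_neg, add_zero, zero_add, neg_neg, hmain]
      abel
  have key2 : fromCols (1 : Matrix F F ℝ) (-W)
      * fromRows (((1 : Matrix F F ℝ) - Δ * A_ff) - What * (K⁻¹ * (Z * A_ff + A_cf)))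
          (-(K⁻¹ * (Z * A_ff + A_cf))) = G := by
    rw [fromCols_mul_fromRows, hG]
    simp only [hWhat, Matrix.mul_add, Matrix.add_mul, Matrix.sub_mul, Matrix.mul_sub,
      Matrix.mul_assoc, Matrix.one_mul, Matrix.mul_one, Matrix.zero_mul, Matrix.mul_zero,
      Matrix.neg_mul, Matrix.mul_neg, add_zero, zero_add, neg_neg]
    abel
  set f := algebraMap ℝ ℂ
  set X' : Matrix (F ⊕ C) F ℂ :=
    (fromRows (((1 : Matrix F F ℝ) - Δ * A_ff) - What * (K⁻¹ * (Z * A_ff + A_cf)))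
      (-(K⁻¹ * (Z * A_ff + A_cf)))).map f with hX'
  set V' : Matrix F (F ⊕ C) ℂ := (fromCols (1 : Matrix F F ℝ) (-W)).map f with hV'
  have hE' : ((1 : Matrix (F ⊕ C) (F ⊕ C) ℝ) - Minv * A).map f = X' * V' := by
    rw [key1, Matrix.map_mul]
  have hG' : V' * X' = G.map f := by
    rw [hX', hV', ← Matrix.map_mul, key2]
  set e : Matrix F (F ⊕ C) ℂ := fromCols 1 0 with he
  set e' : Matrix (F ⊕ C) F ℂ := fromRows 1 0 with he'
  have hee : e * e' = 1 := by rw [he, he', fromCols_mul_fromRows]; simp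
  have hab : (X' * e) * (e' * V') = X' * V' := by
    rw [Matrix.mul_assoc, ← Matrix.mul_assoc e, hee, Matrix.one_mul]
  have hba : (e' * V') * (X' * e) = fromBlocks (G.map f) 0 0 0 := by
    rw [Matrix.mul_assoc, ← Matrix.mul_assoc V', hG', he, he', ← Matrix.mul_assoc,
      fromRows_mul, Matrix.one_mul, Matrix.zero_mul, fromRows_mul_fromCols]
    simp
  have hswap : lam ∈ spectrum ℂ ((X' * e) * (e' * V'))
      ↔ lam ∈ spectrum ℂ ((e' * V') * (X' * e)) := by
    have := spectrum.unit_mem_mul_comm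
      (a := X' * e) (b := e' * V') (r := Units.mk0 lam hlam)
    simpa using this
  rw [hE', ← hab, hswap, hba]
  exact spec_pad (G.map f) lam hlam
end

section
/- Suppose A_ff is invertible, set Δ := A_ff⁻¹ (exact F-point solve), and suppose K := R*A*P is invertible. Let E_TG := (fromBlocks (I - Δ*A_ff) (-Δ*A_fc) 0 I) * (I - P*K⁻¹*R*A) be the two-grid error-propagation operator. Then the spectral radius of E_TG equals the spectral radius of (W + A_ff⁻¹*A_fc) * K⁻¹ * (Z*A_ff + A_cf), where spectral radii are computed over ℂ. -/
open Matrix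

private lemma tg_det_sub_eq {m n : Type*} [Fintype m] [Fintype n] [DecidableEq m] [DecidableEq n]
    (M : Matrix m n ℂ) (N : Matrix n m ℂ) {z : ℂ} (hz : z ≠ 0) :
    (algebraMap ℂ (Matrix m m ℂ) z - M * N).det
      = z ^ Fintype.card m * (1 + ((-z⁻¹) • M) * N).det := by
  have e1 : algebraMap ℂ (Matrix m m ℂ) z - M * N = z • (1 + ((-z⁻¹) • M) * N) := by
    rw [Algebra.algebraMap_eq_smul_one, smul_add, Matrix.smul_mul, smul_smul]
    have : z * -z⁻¹ = -1 := by field_simp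
    rw [this, neg_one_smul, ← sub_eq_add_neg]
  rw [e1, det_smul]

private lemma tg_mem_spec_swap {m n : Type*} [Fintype m] [Fintype n] [DecidableEq m]
    [DecidableEq n] (M : Matrix m n ℂ) (N : Matrix n m ℂ) {z : ℂ} (hz : z ≠ 0)
    (h : z ∈ spectrum ℂ (M * N)) : z ∈ spectrum ℂ (N * M) := by
  rw [spectrum.mem_iff] at h ⊢
  intro hu
  apply h
  rw [Matrix.isUnit_iff_isUnit_det] at hu ⊢
  rw [tg_det_sub_eq M N hz]
  rw [tg_det_sub_eq N M hz] at hu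
  have hd : IsUnit (1 + ((-z⁻¹) • N) * M).det := (IsUnit.mul_iff.mp hu).2
  rw [det_one_add_mul_comm] at hd
  have : M * ((-z⁻¹) • N) = ((-z⁻¹) • M) * N := by
    rw [Matrix.mul_smul, Matrix.smul_mul]
  rw [this] at hd
  exact (IsUnit.pow _ (isUnit_iff_ne_zero.mpr hz)).mul hd

private lemma tg_specRad_le {m n : Type*} [Fintype m] [Fintype n] [DecidableEq m] [DecidableEq n]
    (M : Matrix m n ℂ) (N : Matrix n m ℂ) :
    spectralRadius ℂ (M * N) ≤ spectralRadius ℂ (N * M) := by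
  simp only [spectralRadius]
  refine iSup₂_le fun z hzmem => ?_
  rcases eq_or_ne z 0 with rfl | h
  · simp
  · exact le_iSup₂ (f := fun k (_ : k ∈ spectrum ℂ (N * M)) => (‖k‖₊ : ENNReal)) z
      (tg_mem_spec_swap M N h hzmem)

private lemma tg_specRad_swap {m n : Type*} [Fintype m] [Fintype n] [DecidableEq m]
    [DecidableEq n] (M : Matrix m n ℂ) (N : Matrix n m ℂ) :
    spectralRadius ℂ (M * N) = spectralRadius ℂ (N * M) :=
  le_antisymm (tg_specRad_le M N) (tg_specRad_le N M)

/-- With the exact F-point solve `Δ = A_ff⁻¹`, the spectral radius of the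
two-grid error-propagation operator equals that of
`(W + A_ff⁻¹ A_fc) K⁻¹ (Z A_ff + A_cf)`. -/
theorem two_grid_spectral_radius_exact_F_solve
    {F C : Type*} [Fintype F] [Fintype C] [DecidableEq F] [DecidableEq C]
    [Nonempty F] [Nonempty C]
    (A_ff : Matrix F F ℝ) (A_fc : Matrix F C ℝ) (A_cf : Matrix C F ℝ) (A_cc : Matrix C C ℝ)
    (W : Matrix F C ℝ) (Z : Matrix C F ℝ) (Δ : Matrix F F ℝ)
    (hAff : IsUnit A_ff.det) (hΔ : Δ = A_ff⁻¹)
    (A : Matrix (F ⊕ C) (F ⊕ C) ℝ) (hA : A = fromBlocks A_ff A_fc A_cf A_cc)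
    (P : Matrix (F ⊕ C) C ℝ) (hP : P = fromRows W (1 : Matrix C C ℝ))
    (R : Matrix C (F ⊕ C) ℝ) (hR : R = fromCols Z (1 : Matrix C C ℝ))
    (K : Matrix C C ℝ) (hK : K = R * A * P) (hKinv : IsUnit K.det)
    (E_TG : Matrix (F ⊕ C) (F ⊕ C) ℝ)
    (hE : E_TG = fromBlocks ((1 : Matrix F F ℝ) - Δ * A_ff) (-(Δ * A_fc)) 0 (1 : Matrix C C ℝ)
        * ((1 : Matrix (F ⊕ C) (F ⊕ C) ℝ) - P * K⁻¹ * R * A)) :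
    spectralRadius ℂ (E_TG.map (algebraMap ℝ ℂ))
      = spectralRadius ℂ
          (((W + A_ff⁻¹ * A_fc) * K⁻¹ * (Z * A_ff + A_cf)).map (algebraMap ℝ ℂ)) := by
  have hXff : A_ff⁻¹ * A_ff = 1 := Matrix.nonsing_inv_mul _ hAff
  have hKK : K⁻¹ * K = 1 := Matrix.nonsing_inv_mul _ hKinv
  -- expansion of K
  have hKexp : K = (Z * A_ff + A_cf) * W + (Z * A_fc + A_cc) := by
    rw [hK, hR, hA, hP, fromCols_mul_fromBlocks, fromCols_mul_fromRows]
    simp only [Matrix.one_mul]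
    noncomm_ring
  -- key factorization of E_TG
  have key : E_TG = fromRows (A_ff⁻¹ * A_fc) (-1)
      * fromCols (K⁻¹ * (Z * A_ff + A_cf)) (K⁻¹ * (Z * A_fc + A_cc) - 1) := by
    rw [hE, hΔ, hA, hP, hR, hXff, sub_self]
    rw [Matrix.fromRows_mul, fromRows_mul_fromCols, fromRows_mul_fromCols,
      Matrix.mul_sub, Matrix.mul_one, fromBlocks_multiply, fromBlocks_multiply,
      sub_eq_add_neg, Matrix.fromBlocks_neg, Matrix.fromBlocks_add]
    rw [Matrix.fromBlocks_inj]
    refine ⟨?_, ?_, ?_, ?_⟩ <;>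
    · simp only [Matrix.zero_mul, Matrix.mul_zero, Matrix.one_mul, Matrix.mul_one,
        Matrix.neg_mul, Matrix.mul_neg, Matrix.mul_add, Matrix.add_mul, Matrix.mul_sub,
        Matrix.sub_mul, sub_eq_add_neg, neg_add, neg_neg, zero_add, add_zero,
        Matrix.mul_assoc]
      try abel
  -- second factorization
  have key2 : fromCols (K⁻¹ * (Z * A_ff + A_cf)) (K⁻¹ * (Z * A_fc + A_cc) - 1)
      * fromRows (A_ff⁻¹ * A_fc) (-1 : Matrix C C ℝ)
      = (K⁻¹ * (Z * A_ff + A_cf)) * (W + A_ff⁻¹ * A_fc) := by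
    have h1 : K⁻¹ * (Z * A_ff + A_cf) * W = 1 - K⁻¹ * (Z * A_fc + A_cc) := by
      have h2 : (Z * A_ff + A_cf) * W = K - (Z * A_fc + A_cc) := by
        rw [hKexp]; noncomm_ring
      rw [Matrix.mul_assoc, h2, Matrix.mul_sub, hKK]
    rw [fromCols_mul_fromRows, Matrix.mul_add (K⁻¹ * (Z * A_ff + A_cf)) W (A_ff⁻¹ * A_fc), h1]
    noncomm_ring
  calc spectralRadius ℂ (E_TG.map (algebraMap ℝ ℂ))
      = spectralRadius ℂ ((fromRows (A_ff⁻¹ * A_fc) (-1)).map (algebraMap ℝ ℂ)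
          * (fromCols (K⁻¹ * (Z * A_ff + A_cf)) (K⁻¹ * (Z * A_fc + A_cc) - 1)).map
            (algebraMap ℝ ℂ)) := by rw [key, Matrix.map_mul]
    _ = spectralRadius ℂ
          ((fromCols (K⁻¹ * (Z * A_ff + A_cf)) (K⁻¹ * (Z * A_fc + A_cc) - 1)).map
            (algebraMap ℝ ℂ) * (fromRows (A_ff⁻¹ * A_fc) (-1)).map (algebraMap ℝ ℂ)) :=
        tg_specRad_swap _ _
    _ = spectralRadius ℂ (((K⁻¹ * (Z * A_ff + A_cf)).map (algebraMap ℝ ℂ))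
          * ((W + A_ff⁻¹ * A_fc).map (algebraMap ℝ ℂ))) := by
        rw [← Matrix.map_mul, key2, Matrix.map_mul]
    _ = spectralRadius ℂ (((W + A_ff⁻¹ * A_fc).map (algebraMap ℝ ℂ))
          * ((K⁻¹ * (Z * A_ff + A_cf)).map (algebraMap ℝ ℂ))) := tg_specRad_swap _ _
    _ = spectralRadius ℂ
          (((W + A_ff⁻¹ * A_fc) * K⁻¹ * (Z * A_ff + A_cf)).map (algebraMap ℝ ℂ)) := by
        rw [← Matrix.map_mul, Matrix.mul_assoc]
end

section
/- Suppose A_ff is invertible and K := R*A*P is invertible, and let Δ : Matrix F F ℝ. Define G := (I - Δ*A_ff) + Δ*(A_ff*W + A_fc)*K⁻¹*(Z*A_ff + A_cf). If the interpolation is ideal (W = -A_ff⁻¹*A_fc) or the restriction is ideal (Z = -A_cf*A_ff⁻¹), then G = I - Δ*A_ff. Consequently, if additionally Δ = A_ff⁻¹, then the two-grid error-propagation operator E_TG := (fromBlocks (I - Δ*A_ff) (-Δ*A_fc) 0 I) * (I - P*K⁻¹*R*A) has spectral radius zero. -/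
open Matrix

lemma spectralRadius_eq_zero_of_isNilpotent' {A : Type*} [Ring A] [Algebra ℂ A] [Nontrivial A]
    {a : A} (h : IsNilpotent a) : spectralRadius ℂ a = 0 := by
  refine le_antisymm ?_ zero_le
  rw [spectralRadius]
  refine iSup₂_le fun k hk => ?_
  obtain ⟨n, hn⟩ := h
  have h1 : a ^ (n + 1) = 0 := by rw [pow_succ, hn, zero_mul]
  have hmem : k ^ (n + 1) ∈ spectrum ℂ (a ^ (n + 1)) := by
    have h2 := spectrum.subset_polynomial_aeval a ((Polynomial.X : Polynomial ℂ) ^ (n + 1))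
      (Set.mem_image_of_mem _ hk)
    simpa using h2
  rw [h1, spectrum.zero_eq] at hmem
  have hk0 : k = 0 := pow_eq_zero_iff (Nat.succ_ne_zero n) |>.mp hmem
  simp [hk0]

/-- If interpolation or restriction is ideal, then
`G = (I - Δ A_ff) + Δ (A_ff W + A_fc) K⁻¹ (Z A_ff + A_cf)` reduces to
`I - Δ A_ff`; consequently, with the exact F-solve `Δ = A_ff⁻¹`, the two-grid
error-propagation operator has spectral radius zero. -/
theorem two_grid_ideal_transfer_spectral_radius_zero
    {F C : Type*} [Fintype F] [Fintype C] [DecidableEq F] [DecidableEq C]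
    [Nonempty F] [Nonempty C]
    (A_ff : Matrix F F ℝ) (A_fc : Matrix F C ℝ) (A_cf : Matrix C F ℝ) (A_cc : Matrix C C ℝ)
    (W : Matrix F C ℝ) (Z : Matrix C F ℝ) (Δ : Matrix F F ℝ)
    (hAff : IsUnit A_ff.det)
    (A : Matrix (F ⊕ C) (F ⊕ C) ℝ) (hA : A = fromBlocks A_ff A_fc A_cf A_cc)
    (P : Matrix (F ⊕ C) C ℝ) (hP : P = fromRows W (1 : Matrix C C ℝ))
    (R : Matrix C (F ⊕ C) ℝ) (hR : R = fromCols Z (1 : Matrix C C ℝ))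
    (K : Matrix C C ℝ) (hK : K = R * A * P) (hKinv : IsUnit K.det)
    (G : Matrix F F ℝ)
    (hG : G = ((1 : Matrix F F ℝ) - Δ * A_ff)
        + Δ * (A_ff * W + A_fc) * K⁻¹ * (Z * A_ff + A_cf))
    (hideal : W = -(A_ff⁻¹ * A_fc) ∨ Z = -(A_cf * A_ff⁻¹)) :
    G = (1 : Matrix F F ℝ) - Δ * A_ff ∧
    (Δ = A_ff⁻¹ →
      spectralRadius ℂ
        ((fromBlocks ((1 : Matrix F F ℝ) - Δ * A_ff) (-(Δ * A_fc)) 0 (1 : Matrix C C ℝ)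
          * ((1 : Matrix (F ⊕ C) (F ⊕ C) ℝ) - P * K⁻¹ * R * A)).map (algebraMap ℝ ℂ))
        = 0) := by
  have hfi : A_ff * A_ff⁻¹ = 1 := mul_nonsing_inv _ hAff
  have hif : A_ff⁻¹ * A_ff = 1 := nonsing_inv_mul _ hAff
  have hiK : K⁻¹ * K = 1 := nonsing_inv_mul _ hKinv
  have hG' : G = 1 - Δ * A_ff := by
    rcases hideal with hW | hZ
    · have h0 : A_ff * W + A_fc = 0 := by
        rw [hW, Matrix.mul_neg, ← Matrix.mul_assoc, hfi, Matrix.one_mul, neg_add_cancel]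
      rw [hG, h0, Matrix.mul_zero, Matrix.zero_mul, Matrix.zero_mul, add_zero]
    · have h0 : Z * A_ff + A_cf = 0 := by
        rw [hZ, Matrix.neg_mul, Matrix.mul_assoc, hif, Matrix.mul_one, neg_add_cancel]
      rw [hG, h0, Matrix.mul_zero, add_zero]
  refine ⟨hG', fun hΔ => ?_⟩
  subst hΔ
  set S : Matrix (F ⊕ C) (F ⊕ C) ℝ :=
    fromBlocks ((1 : Matrix F F ℝ) - A_ff⁻¹ * A_ff) (-(A_ff⁻¹ * A_fc)) 0 (1 : Matrix C C ℝ)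
    with hS
  set T : Matrix (F ⊕ C) (F ⊕ C) ℝ :=
    (1 : Matrix (F ⊕ C) (F ⊕ C) ℝ) - P * K⁻¹ * R * A with hT
  have hS0 : S = fromBlocks 0 (-(A_ff⁻¹ * A_fc)) 0 (1 : Matrix C C ℝ) := by
    rw [hS, hif, sub_self]
  have hnil : IsNilpotent (S * T) := by
    rcases hideal with hW | hZ
    · -- ideal interpolation : S = fromColumns 0 P and T * P = 0
      have hSP : S = fromCols (0 : Matrix (F ⊕ C) F ℝ) P := by
        rw [hS0, hP, hW, ← fromCols_fromRows_eq_fromBlocks, fromRows_zero]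
      have hTP : T * P = 0 := by
        have hPP : P * K⁻¹ * R * A * P = P := by
          rw [Matrix.mul_assoc (P * K⁻¹ * R) A P, Matrix.mul_assoc (P * K⁻¹) R (A * P),
            ← Matrix.mul_assoc R A P, ← hK, Matrix.mul_assoc P K⁻¹ K, hiK, Matrix.mul_one]
        rw [hT, Matrix.sub_mul, Matrix.one_mul, hPP, sub_self]
      have hTS : T * S = 0 := by
        rw [hSP, mul_fromCols, Matrix.mul_zero, hTP, fromCols_zero]
      refine ⟨2, ?_⟩
      rw [pow_two, Matrix.mul_assoc, ← Matrix.mul_assoc T S T, hTS, Matrix.zero_mul,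
        Matrix.mul_zero]
    · -- ideal restriction : S * T = 0
      have h0 : Z * A_ff + A_cf = 0 := by
        rw [hZ, Matrix.neg_mul, Matrix.mul_assoc, hif, Matrix.mul_one, neg_add_cancel]
      have hRA : R * A = fromCols (0 : Matrix C F ℝ) (Z * A_fc + A_cc) := by
        rw [hR, hA, fromCols_mul_fromBlocks, Matrix.one_mul, Matrix.one_mul, h0]
      have hKY : K = Z * A_fc + A_cc := by
        rw [hK, hRA, hP, fromCols_mul_fromRows, Matrix.zero_mul, Matrix.mul_one, zero_add]
      have hPKRA : P * K⁻¹ * R * A = fromBlocks 0 W 0 (1 : Matrix C C ℝ) := by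
        rw [Matrix.mul_assoc (P * K⁻¹) R A, hRA, mul_fromCols, Matrix.mul_zero,
          Matrix.mul_assoc P K⁻¹ _, ← hKY, hiK, Matrix.mul_one, hP,
          ← fromCols_fromRows_eq_fromBlocks, fromRows_zero]
      refine ⟨1, ?_⟩
      rw [pow_one, hS0, hT, hPKRA, Matrix.mul_sub, Matrix.mul_one, fromBlocks_multiply]
      simp
  have hnilC : IsNilpotent ((S * T).map (algebraMap ℝ ℂ)) := by
    have := hnil.map (RingHom.mapMatrix (algebraMap ℝ ℂ))
    simpa [RingHom.mapMatrix_apply] using this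
  haveI : Nontrivial (Matrix (F ⊕ C) (F ⊕ C) ℂ) := by
    unfold Matrix; infer_instance
  exact spectralRadius_eq_zero_of_isNilpotent' hnilC
end
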